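/- Let f be a real binary form of degree n ≥ 2 and let φ: S¹ → ℝ² be defined by φ(cos θ, sin θ) = (f_x, f_y) evaluated at (cos θ, sin θ). Then det(φ, φ_θ) = H(f)/(n−1), where φ_θ is the derivative of φ with respect to θ and H(f) = f_xx·f_yy − f_xy² is the Hessian determinant of f. -/

import Mathlib

open MvPolynomial
/-- The Hessian determinant `f_xx f_yy - f_xy ^ 2` of a binary form. -/
noncomputable def hess (f : MvPolynomial (Fin 2) ℝ) : MvPolynomial (Fin 2) ℝ :=
  pderiv 0 (pderiv 0 f) * pderiv 1 (pderiv 1 f) - (pderiv 0 (pderiv 1 f)) ^ 2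

-- pderiv commutes
lemma pderiv_comm' (i j : Fin 2) (p : MvPolynomial (Fin 2) ℝ) :
    pderiv i (pderiv j p) = pderiv j (pderiv i p) := by
  induction p using MvPolynomial.induction_on' with
  | monomial s a =>
    rcases eq_or_ne i j with rfl | hij
    · rfl
    · simp only [pderiv_monomial]
      rw [Finsupp.tsub_apply, Finsupp.tsub_apply, Finsupp.single_apply,
        Finsupp.single_apply, if_neg (by simpa using hij.symm), if_neg (by simpa using hij)]
      rw [tsub_right_comm, Nat.sub_zero, Nat.sub_zero]
      congr 1
      ring
  | add p q hp hq => simp [hp, hq]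

-- Euler's identity
lemma euler {m : ℕ} {p : MvPolynomial (Fin 2) ℝ} (hp : p.IsHomogeneous m) :
    X 0 * pderiv 0 p + X 1 * pderiv 1 p = C (m : ℝ) * p := by
  rw [p.as_sum]
  rw [map_sum (pderiv 0), map_sum (pderiv 1), Finset.mul_sum, Finset.mul_sum, Finset.mul_sum,
    ← Finset.sum_add_distrib]
  refine Finset.sum_congr rfl fun d hd => ?_
  have hc : coeff d p ≠ 0 := by simpa using hd
  have hdeg : d.degree = m := by
    by_contra h
    exact hc (hp.coeff_eq_zero h)
  have hsum : d 0 + d 1 = m := by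
    rw [← hdeg, Finsupp.degree_eq_sum, Fin.sum_univ_two]
  have key : ∀ i : Fin 2, X i * pderiv i (monomial d (coeff d p)) =
      monomial d ((d i : ℝ) * coeff d p) := by
    intro i
    rw [pderiv_monomial]
    rcases Nat.eq_zero_or_pos (d i) with h0 | h0
    · simp [h0]
    · rw [X, monomial_mul]
      congr 1
      · rw [add_tsub_cancel_of_le]
        · rwa [Finsupp.single_le_iff]
      · ring
  rw [key 0, key 1, ← map_add, C_mul_monomial]
  congr 1
  push_cast [← hsum]
  ring

-- derivative of evaluation along the circle
lemma hasDerivAt_eval_circle (p : MvPolynomial (Fin 2) ℝ) (θ : ℝ) :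
    HasDerivAt (fun θ => eval ![Real.cos θ, Real.sin θ] p)
      (eval ![Real.cos θ, Real.sin θ] (pderiv 0 p) * (-Real.sin θ) +
       eval ![Real.cos θ, Real.sin θ] (pderiv 1 p) * Real.cos θ) θ := by
  induction p using MvPolynomial.induction_on with
  | C a => simpa using hasDerivAt_const θ a
  | add p q hp hq =>
    simp only [map_add]
    exact (hp.add hq).congr_deriv (by ring)
  | mul_X p i hp =>
    have hi : i = 0 ∨ i = 1 := by omega
    rcases hi with rfl | rfl
    · have h1 : (fun θ => eval ![Real.cos θ, Real.sin θ] (p * X 0)) =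
          fun θ => eval ![Real.cos θ, Real.sin θ] p * Real.cos θ := by
        funext t; simp
      rw [h1]
      have := hp.mul (Real.hasDerivAt_cos θ)
      refine this.congr_deriv ?_
      simp [pderiv_mul]
      ring
    · have h1 : (fun θ => eval ![Real.cos θ, Real.sin θ] (p * X 1)) =
          fun θ => eval ![Real.cos θ, Real.sin θ] p * Real.sin θ := by
        funext t; simp
      rw [h1]
      have := hp.mul (Real.hasDerivAt_sin θ)
      refine this.congr_deriv ?_
      simp [pderiv_mul]
      ring

theorem stmt_4 (n : ℕ) (hn : 2 ≤ n) (f : MvPolynomial (Fin 2) ℝ)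
    (hhom : f.IsHomogeneous n)
    (a b : ℝ → ℝ)
    (ha : ∀ θ, a θ = eval ![Real.cos θ, Real.sin θ] (pderiv 0 f))
    (hb : ∀ θ, b θ = eval ![Real.cos θ, Real.sin θ] (pderiv 1 f)) :
    ∀ θ, a θ * deriv b θ - b θ * deriv a θ =
      eval ![Real.cos θ, Real.sin θ] (hess f) / ((n : ℝ) - 1) := by
  intro θ
  set v : Fin 2 → ℝ := ![Real.cos θ, Real.sin θ] with hv
  have ha' : a = fun θ => eval ![Real.cos θ, Real.sin θ] (pderiv 0 f) := funext ha
  have hb' : b = fun θ => eval ![Real.cos θ, Real.sin θ] (pderiv 1 f) := funext hb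
  have hda : deriv a θ = eval v (pderiv 0 (pderiv 0 f)) * (-Real.sin θ) +
      eval v (pderiv 1 (pderiv 0 f)) * Real.cos θ := by
    rw [ha']; exact (hasDerivAt_eval_circle (pderiv 0 f) θ).deriv
  have hdb : deriv b θ = eval v (pderiv 0 (pderiv 1 f)) * (-Real.sin θ) +
      eval v (pderiv 1 (pderiv 1 f)) * Real.cos θ := by
    rw [hb']; exact (hasDerivAt_eval_circle (pderiv 1 f) θ).deriv
  -- Euler for pderiv 0 f and pderiv 1 f, via differentiating Euler for f
  have hE := euler hhom
  have hE0 := congrArg (pderiv 0) hE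
  have hE1 := congrArg (pderiv 1) hE
  simp only [map_add, pderiv_mul, pderiv_X_self, pderiv_X_of_ne (by decide : (1:Fin 2) ≠ 0),
    pderiv_X_of_ne (by decide : (0:Fin 2) ≠ 1), pderiv_C, one_mul, zero_mul, zero_add, add_zero,
    zero_mul] at hE0 hE1
  have hev0 := congrArg (eval v) hE0
  have hev1 := congrArg (eval v) hE1
  simp only [map_add, map_mul, eval_X, eval_C] at hev0 hev1
  have hcomm : eval v (pderiv 1 (pderiv 0 f)) = eval v (pderiv 0 (pderiv 1 f)) := by
    rw [pderiv_comm']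
  have hv0 : v 0 = Real.cos θ := rfl
  have hv1 : v 1 = Real.sin θ := rfl
  have hpyth : Real.cos θ ^ 2 + Real.sin θ ^ 2 = 1 := by
    rw [add_comm]; exact Real.sin_sq_add_cos_sq θ
  have hm : (n : ℝ) - 1 ≠ 0 := by
    have : (2 : ℝ) ≤ (n : ℝ) := by exact_mod_cast hn
    linarith
  rw [ha θ, hb θ, ← hv, hda, hdb]
  simp only [hess, map_sub, map_mul, map_pow]
  simp only [hv0, hv1] at hev0 hev1
  rw [hcomm] at hev1 ⊢
  rw [eq_div_iff hm]
  set A := eval v (pderiv 0 (pderiv 0 f))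
  set B := eval v (pderiv 0 (pderiv 1 f))
  set D := eval v (pderiv 1 (pderiv 1 f))
  set P := eval v (pderiv 0 f)
  set Q := eval v (pderiv 1 f)
  set c := Real.cos θ
  set s := Real.sin θ
  -- hev0 : P + c * A + s * B = n * P  (roughly); hev1 : c * B + Q + s * D = n * Q
  linear_combination (s * B - c * D) * hev0 + (-s * A + c * B) * hev1 + (A * D - B ^ 2) * hpyth
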